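/- arXiv:1711.08826 — 2 statements merged into one kernel-verified Lean document; each statement's English description precedes it below -/
import Mathlib

section
/- Let X be a Banach function space on the unit circle T and let K ∈ L¹(T) be a nonnegative function with K(e^{iθ}) = K(e^{-iθ}) for almost all θ ∈ [-π, π]. If the convolution operator C_K f = f * K is bounded on the associate space X', then C_K is bounded on X with operator norm at most ‖C_K‖_{B(X')}. -/
open MeasureTheory Real Set Filter Topology
open scoped ENNReal NNReal Classical

set_option synthInstance.maxHeartbeats 1000000
set_option maxHeartbeats 1000000
noncomputable section

/-- Normalized Lebesgue measure on the circle, modeled on `(-π, π]`. -/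
def μT : Measure ℝ := (ENNReal.ofReal (2 * π))⁻¹ • (volume.restrict (Set.Ioc (-π) π))

/-- A Banach function norm in the sense of Bennett–Sharpley (axioms (A1)–(A5)),
on the circle modeled as `(-π, π]` with normalized Lebesgue measure `μT`. -/
structure BFNorm where
  ρ : (ℝ → ℝ≥0∞) → ℝ≥0∞
  eq_zero_iff : ∀ f : ℝ → ℝ≥0∞, Measurable f → (ρ f = 0 ↔ f =ᵐ[μT] 0)
  smul : ∀ (c : ℝ≥0∞) (f : ℝ → ℝ≥0∞), Measurable f → ρ (fun x => c * f x) = c * ρ f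
  add_le : ∀ f g : ℝ → ℝ≥0∞, Measurable f → Measurable g →
    ρ (fun x => f x + g x) ≤ ρ f + ρ g
  mono : ∀ f g : ℝ → ℝ≥0∞, Measurable f → Measurable g →
    (∀ᵐ x ∂μT, f x ≤ g x) → ρ f ≤ ρ g
  fatou : ∀ f : ℕ → ℝ → ℝ≥0∞, (∀ n, Measurable (f n)) →
    (∀ n, ∀ᵐ x ∂μT, f n x ≤ f (n + 1) x) →
    ρ (fun x => ⨆ n, f n x) = ⨆ n, ρ (f n)
  finite_on_char : ∀ E : Set ℝ, MeasurableSet E → ρ (E.indicator 1) < ⊤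
  embeds_L1 : ∀ E : Set ℝ, MeasurableSet E → ∃ C : ℝ≥0∞, C ≠ 0 ∧ C ≠ ⊤ ∧
    ∀ f : ℝ → ℝ≥0∞, Measurable f → ∫⁻ x in E, f x ∂μT ≤ C * ρ f

/-- The (extended-real-valued) norm of a complex-valued function in the Banach
function space given by the Banach function norm `N`. -/
def BFNorm.normC (N : BFNorm) (f : ℝ → ℂ) : ℝ≥0∞ := N.ρ (fun x => (‖f x‖₊ : ℝ≥0∞))

/-- The associate norm `ρ'` of a Banach function norm. -/
def BFNorm.assoc (N : BFNorm) (g : ℝ → ℝ≥0∞) : ℝ≥0∞ :=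
  ⨆ f ∈ {f : ℝ → ℝ≥0∞ | Measurable f ∧ N.ρ f ≤ 1}, ∫⁻ x, f x * g x ∂μT

/-- The associate norm applied to a complex-valued function: the norm of the
associate space (Köthe dual) `X'`. -/
def BFNorm.assocC (N : BFNorm) (g : ℝ → ℂ) : ℝ≥0∞ := N.assoc (fun x => (‖g x‖₊ : ℝ≥0∞))

/-- Convolution on the circle: `(f*K)(e^{iθ}) = (1/2π) ∫_{-π}^{π} f(e^{i(θ-φ)}) K(e^{iφ}) dφ`. -/
def conv (f K : ℝ → ℂ) (θ : ℝ) : ℂ := (2 * π)⁻¹ • ∫ φ in (-π)..π, f (θ - φ) * K φ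

/-- The operator "norm" of the convolution operator `C_K : f ↦ f * K` with respect to a
given extended-real-valued norm `N`, as a supremum over the unit ball of (measurable,
2π-periodic) functions. -/
def convOpNorm (N : (ℝ → ℂ) → ℝ≥0∞) (K : ℝ → ℂ) : ℝ≥0∞ :=
  ⨆ f ∈ {f : ℝ → ℂ | Measurable f ∧ Function.Periodic f (2 * π) ∧ N f ≤ 1}, N (conv f K)

/-- The weight of the paper: `w(e^{iθ}) = √m` for `π/(2m) ≤ |θ| ≤ π/(2m-1)` and
`w(e^{iθ}) = 1` otherwise (in particular for `π/(2m+1) < |θ| < π/(2m)`). -/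
def wght (θ : ℝ) : ℝ :=
  1 + ∑' m : ℕ, (Real.sqrt ((m : ℝ) + 1) - 1) *
      Set.indicator {x : ℝ | π / (2 * ((m : ℝ) + 1)) ≤ |x| ∧ |x| ≤ π / (2 * ((m : ℝ) + 1) - 1)}
        (fun _ => (1 : ℝ)) θ

/-- The `n`-th Fejér kernel `F_n(e^{iθ}) = Σ_{k=-n}^{n} (1 - |k|/(n+1)) e^{ikθ}`. -/
def fejer (n : ℕ) (θ : ℝ) : ℂ :=
  ∑ k ∈ Finset.Icc (-(n : ℤ)) (n : ℤ),
    ((1 - |(k : ℝ)| / ((n : ℝ) + 1) : ℝ) : ℂ) * Complex.exp (Complex.I * k * θ)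

/-- The `n`-th Fourier coefficient `f̂(n) = (1/2π) ∫_{-π}^{π} f(e^{iθ}) e^{-inθ} dθ`. -/
def fourierCoeff' (f : ℝ → ℂ) (n : ℤ) : ℂ :=
  (2 * π)⁻¹ • ∫ θ in (-π)..π, f θ * Complex.exp (-(Complex.I * n * θ))

/-- `sup_{0≤r<1} M_p(r,F)^p` for a function `F` on the unit disk: `F ∈ H^p(𝔻)` iff this
is finite (together with analyticity). -/
def HpNorm (p : ℝ) (F : ℂ → ℂ) : ℝ≥0∞ :=
  ⨆ r ∈ Set.Ico (0 : ℝ) 1,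
    ∫⁻ θ, ((‖F ((r : ℂ) * Complex.exp (Complex.I * θ))‖₊ : ℝ≥0∞)) ^ p ∂μT

/-- The Poisson kernel `P(r,θ) = (1-r²)/(1-2r cos θ + r²)`. -/
def poissonK (r θ : ℝ) : ℝ := (1 - r ^ 2) / (1 - 2 * r * Real.cos θ + r ^ 2)

lemma ennnorm_eq_ofReal {r : ℝ} (hr : 0 ≤ r) : (‖r‖₊ : ℝ≥0∞) = ENNReal.ofReal r :=
  Real.enorm_eq_ofReal hr

lemma two_pi_pos' : (0:ℝ) < 2 * π := by positivity

instance : IsFiniteMeasure μT := by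
  constructor
  rw [μT]
  simp [Measure.smul_apply, Real.volume_Ioc]
  exact ENNReal.mul_lt_top (ENNReal.inv_lt_top.mpr (by simp [Real.pi_pos])) ENNReal.ofReal_lt_top

example : SFinite μT := inferInstance

lemma lint_μT (f : ℝ → ℝ≥0∞) : ∫⁻ x, f x ∂μT = (ENNReal.ofReal (2 * π))⁻¹ * ∫⁻ x in Set.Ioc (-π) π, f x := by
  rw [μT, lintegral_smul_measure, smul_eq_mul]

-- translation lemma
lemma lint_translate (F : ℝ → ℝ≥0∞) (hF : Measurable F) (hper : Function.Periodic F (2*π)) (φ : ℝ) :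
    ∫⁻ θ in Set.Ioc (-π) π, F (θ - φ) = ∫⁻ θ in Set.Ioc (-π) π, F θ := by
  have h1 : MeasurePreserving (fun x : ℝ => x - φ) volume volume :=
    measurePreserving_sub_right volume φ
  have h2 : MeasurableEmbedding (fun x : ℝ => x - φ) :=
    (Homeomorph.subRight φ).measurableEmbedding
  have h3 : (fun x : ℝ => x - φ) ⁻¹' (Set.Ioc (-π - φ) (π - φ)) = Set.Ioc (-π) π := by
    ext x; simp only [Set.mem_preimage, Set.mem_Ioc]; constructor <;> (intro h; exact ⟨by linarith [h.1], by linarith [h.2]⟩)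
  have := h1.setLIntegral_comp_preimage_emb h2 F (Set.Ioc (-π - φ) (π - φ))
  rw [h3] at this
  rw [this]
  haveI : VAddInvariantMeasure (AddSubgroup.zmultiples (2*π)) ℝ volume :=
    ⟨fun c s _ => measure_preimage_add _ _ _⟩
  have d1 : IsAddFundamentalDomain (AddSubgroup.zmultiples (2*π)) (Set.Ioc (-π - φ) (π - φ)) volume := by
    have := isAddFundamentalDomain_Ioc two_pi_pos' (-π - φ) volume
    convert this using 2; rfl; ring
  have d2 : IsAddFundamentalDomain (AddSubgroup.zmultiples (2*π)) (Set.Ioc (-π) π) volume := by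
    have := isAddFundamentalDomain_Ioc two_pi_pos' (-π) volume
    convert this using 2; rfl; ring
  exact d1.setLIntegral_eq d2 F hper.map_vadd_zmultiples

-- reflection lemma
lemma lint_reflect (F : ℝ → ℝ≥0∞) (hF : Measurable F) :
    ∫⁻ θ in Set.Ioc (-π) π, F (-θ) = ∫⁻ θ in Set.Ioc (-π) π, F θ := by
  have h1 : MeasurePreserving (fun x : ℝ => -x) volume volume :=
    Measure.measurePreserving_neg volume
  have h2 : MeasurableEmbedding (fun x : ℝ => -x) :=
    (Homeomorph.neg ℝ).measurableEmbedding
  have h3 : (fun x : ℝ => -x) ⁻¹' (Set.Ioc (-π) π) = Set.Ico (-π) π := by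
    ext x; simp only [Set.mem_preimage, Set.mem_Ioc, Set.mem_Ico]; constructor <;> (intro h; exact ⟨by linarith [h.1], by linarith [h.2]⟩)
  have := h1.setLIntegral_comp_preimage_emb h2 F (Set.Ioc (-π) π)
  rw [h3] at this
  rw [← this]
  refine setLIntegral_congr ?_
  exact ((Ioo_ae_eq_Ico (α := ℝ) (μ := volume)).symm.trans Ioo_ae_eq_Ioc).symm

namespace BFNorm
variable (N : BFNorm)

lemma rho_zero : N.ρ 0 = 0 :=
  (N.eq_zero_iff 0 measurable_const).mpr (Filter.EventuallyEq.rfl)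

lemma congr_ae {f g : ℝ → ℝ≥0∞} (hf : Measurable f) (hg : Measurable g)
    (h : f =ᵐ[μT] g) : N.ρ f = N.ρ g :=
  le_antisymm (N.mono f g hf hg h.le) (N.mono g f hg hf h.symm.le)

lemma rho_lt_top {f : ℝ → ℝ≥0∞} (hf : Measurable f) {M : ℝ≥0∞} (hM : M ≠ ⊤)
    (hb : ∀ x, f x ≤ M) : N.ρ f < ⊤ := by
  have h1 : N.ρ (fun x => M * (Set.univ.indicator (1 : ℝ → ℝ≥0∞) x)) =
      M * N.ρ (Set.univ.indicator 1) :=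
    N.smul M _ (measurable_one.indicator MeasurableSet.univ)
  have h2 : N.ρ f ≤ N.ρ (fun x => M * (Set.univ.indicator (1 : ℝ → ℝ≥0∞) x)) := by
    refine N.mono _ _ hf (by measurability) (Filter.Eventually.of_forall fun x => ?_)
    simp [Set.indicator_univ, hb x]
  refine lt_of_le_of_lt (h2.trans h1.le) ?_
  exact ENNReal.mul_lt_top (lt_top_iff_ne_top.mpr hM) (N.finite_on_char _ MeasurableSet.univ)

lemma pairing_le {v : ℝ → ℝ≥0∞} (g : ℝ → ℝ≥0∞) (hv : Measurable v) (hρ : N.ρ v ≤ 1) :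
    ∫⁻ x, v x * g x ∂μT ≤ N.assoc g :=
  le_iSup₂_of_le v (Set.mem_setOf.mpr ⟨hv, hρ⟩) le_rfl

lemma assoc_le {g : ℝ → ℝ≥0∞} {c : ℝ≥0∞}
    (h : ∀ v : ℝ → ℝ≥0∞, Measurable v → N.ρ v ≤ 1 → ∫⁻ x, v x * g x ∂μT ≤ c) :
    N.assoc g ≤ c :=
  iSup₂_le fun v hv => h v hv.1 hv.2

lemma assoc_scaled_le_one {g : ℝ → ℝ≥0∞} (h0 : N.assoc g ≠ 0) (ht : N.assoc g ≠ ⊤) :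
    N.assoc (fun x => (N.assoc g)⁻¹ * g x) ≤ 1 := by
  refine N.assoc_le fun v hvm hv1 => ?_
  have h1 : ∫⁻ x, v x * ((N.assoc g)⁻¹ * g x) ∂μT
      = (N.assoc g)⁻¹ * ∫⁻ x, v x * g x ∂μT := by
    rw [← lintegral_const_mul' _ _ (by simp [h0])]
    congr 1; funext x; ring
  rw [h1]
  calc (N.assoc g)⁻¹ * ∫⁻ x, v x * g x ∂μT ≤ (N.assoc g)⁻¹ * N.assoc g := by
        gcongr; exact N.pairing_le g hvm hv1
    _ = 1 := ENNReal.inv_mul_cancel h0 ht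

lemma iSup_min_nat (a : ℝ≥0∞) : ⨆ n : ℕ, min a (n : ℝ≥0∞) = a := by
  refine le_antisymm (iSup_le fun n => min_le_left _ _) ?_
  by_cases ha : a = ⊤
  · subst ha
    have : ∀ n : ℕ, min (⊤:ℝ≥0∞) (n:ℝ≥0∞) = (n:ℝ≥0∞) := fun n => min_eq_right le_top
    simp_rw [this]
    rw [top_le_iff]
    exact ENNReal.iSup_natCast
  · obtain ⟨n, hn⟩ := ENNReal.exists_nat_gt ha
    exact le_trans (le_of_eq (min_eq_left hn.le).symm) (le_iSup (fun n : ℕ => min a (n:ℝ≥0∞)) n)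

lemma lintegral_mul_trunc (v g : ℝ → ℝ≥0∞) (hv : Measurable v) (hg : Measurable g) :
    ∫⁻ x, v x * g x ∂μT = ⨆ n : ℕ, ∫⁻ x, min (v x) (n : ℝ≥0∞) * g x ∂μT := by
  rw [← lintegral_iSup (f := fun n x => min (v x) (n:ℝ≥0∞) * g x) (fun n => (hv.min measurable_const).mul hg)]
  · congr 1; funext x
    rw [← ENNReal.iSup_mul, iSup_min_nat]
  · intro n m hnm x
    exact mul_le_mul_left (min_le_min le_rfl (by exact_mod_cast Nat.cast_le.mpr hnm)) _

lemma pull_const (c : ℝ≥0∞) (hc : c ≠ ⊤) (f g : ℝ → ℝ≥0∞) :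
    ∫⁻ x, c * f x * g x ∂μT = c * ∫⁻ x, f x * g x ∂μT := by
  rw [← lintegral_const_mul' c _ hc]; congr 1; funext x; ring

lemma sep (h : ℝ → ℝ≥0∞) (hmeas : Measurable h) {M : ℝ≥0∞} (hM : M ≠ ⊤)
    (hb : ∀ x, h x ≤ M) (hρ : 1 < N.ρ h) :
    ∃ g : ℝ → ℝ≥0∞, Measurable g ∧ N.assoc g ≤ 1 ∧ 1 < ∫⁻ x, h x * g x ∂μT := by
  classical
  -- the convex set
  set C : Set (Lp ℝ 2 μT) := {u : Lp ℝ 2 μT | ∃ v : ℝ → ℝ≥0∞, Measurable v ∧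
    (∀ᵐ x ∂μT, ENNReal.ofReal (u x) ≤ v x) ∧ N.ρ v ≤ 1} with hC
  have hzero : (0 : Lp ℝ 2 μT) ∈ C := by
    refine ⟨0, measurable_const, ?_, by rw [N.rho_zero]; exact zero_le_one⟩
    filter_upwards [Lp.coeFn_zero (E := ℝ) (p := 2) (μ := μT)] with x hx
    rw [hx]; simp
  have hconv : Convex ℝ C := by
    rintro u1 ⟨v1, hv1m, hv1b, hv1ρ⟩ u2 ⟨v2, hv2m, hv2b, hv2ρ⟩ a b ha hb' hab
    refine ⟨fun x => ENNReal.ofReal a * v1 x + ENNReal.ofReal b * v2 x,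
      (hv1m.const_mul _).add (hv2m.const_mul _), ?_, ?_⟩
    · filter_upwards [Lp.coeFn_add (a • u1) (b • u2), Lp.coeFn_smul a u1,
        Lp.coeFn_smul b u2, hv1b, hv2b] with x hx1 hx2 hx3 hx4 hx5
      rw [hx1]
      simp only [Pi.add_apply, hx2, hx3, Pi.smul_apply, smul_eq_mul]
      refine le_trans ENNReal.ofReal_add_le ?_
      rw [ENNReal.ofReal_mul ha, ENNReal.ofReal_mul hb']
      exact add_le_add (mul_le_mul_right hx4 _) (mul_le_mul_right hx5 _)
    · refine le_trans (N.add_le _ _ (hv1m.const_mul _) (hv2m.const_mul _)) ?_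
      rw [N.smul _ _ hv1m, N.smul _ _ hv2m]
      calc ENNReal.ofReal a * N.ρ v1 + ENNReal.ofReal b * N.ρ v2
          ≤ ENNReal.ofReal a * 1 + ENNReal.ofReal b * 1 :=
            add_le_add (mul_le_mul_right hv1ρ _) (mul_le_mul_right hv2ρ _)
        _ = 1 := by
            rw [mul_one, mul_one, ← ENNReal.ofReal_add ha hb', hab, ENNReal.ofReal_one]
  have hclosed : IsClosed C := by
    rw [← isSeqClosed_iff_isClosed]
    intro u ul hu hlim
    obtain ⟨ns, -, hae⟩ := (tendstoInMeasure_of_tendsto_Lp hlim).exists_seq_tendsto_ae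
    choose v hvm hvb hvρ using hu
    set w : ℕ → ℝ → ℝ≥0∞ := fun n x => ⨅ k, ⨅ (_ : n ≤ k), v (ns k) x with hw
    have hwm : ∀ n, Measurable (w n) := fun n =>
      Measurable.iInf fun k => Measurable.iInf fun _ => hvm (ns k)
    have hwmono : ∀ n x, w n x ≤ w (n+1) x := by
      intro n x
      exact le_iInf₂ fun k hk => iInf₂_le k (le_trans (Nat.le_succ n) hk)
    refine ⟨fun x => ⨆ n, w n x, Measurable.iSup hwm, ?_, ?_⟩
    · filter_upwards [hae, ae_all_iff.mpr fun n => hvb (ns n)] with x hx hvx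
      have htd : Tendsto (fun k => ENNReal.ofReal (u (ns k) x)) atTop
          (𝓝 (ENNReal.ofReal (ul x))) :=
        (ENNReal.continuous_ofReal.continuousAt.tendsto).comp hx
      have h1 : ENNReal.ofReal (ul x) =
          Filter.liminf (fun k => ENNReal.ofReal (u (ns k) x)) atTop := htd.liminf_eq.symm
      rw [h1]
      refine le_trans (Filter.liminf_le_liminf (Filter.Eventually.of_forall fun k => hvx k)) ?_
      rw [Filter.liminf_eq_iSup_iInf_of_nat]
    · rw [N.fatou w hwm (fun n => Filter.Eventually.of_forall (hwmono n))]
      refine iSup_le fun n => ?_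
      refine le_trans (N.mono _ _ (hwm n) (hvm (ns n))
        (Filter.Eventually.of_forall fun x => iInf₂_le n le_rfl)) (hvρ (ns n))
  -- the point to separate
  have hne : ∀ x, h x ≠ ⊤ := fun x => (lt_of_le_of_lt (hb x) (lt_top_iff_ne_top.mpr hM)).ne
  set f₀ : ℝ → ℝ := fun x => (h x).toReal with hf₀
  have hf₀m : Measurable f₀ := hmeas.ennreal_toReal
  have hf₀mem : MemLp f₀ 2 μT := by
    refine MemLp.mono_exponent ?_ (le_top : (2:ℝ≥0∞) ≤ ⊤)
    refine memLp_top_of_bound hf₀m.aestronglyMeasurable M.toReal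
      (Filter.Eventually.of_forall fun x => ?_)
    rw [Real.norm_eq_abs, abs_of_nonneg ENNReal.toReal_nonneg]
    exact ENNReal.toReal_mono hM (hb x)
  set uh : Lp ℝ 2 μT := hf₀mem.toLp f₀ with huh
  have hnotmem : uh ∉ C := by
    rintro ⟨v, hvm, hvb, hvρ⟩
    have : ∀ᵐ x ∂μT, h x ≤ v x := by
      filter_upwards [hvb, hf₀mem.coeFn_toLp] with x hx1 hx2
      rw [hx2, hf₀] at hx1
      rwa [ENNReal.ofReal_toReal (hne x)] at hx1
    exact absurd (le_trans (N.mono _ _ hmeas hvm this) hvρ) (not_le.mpr hρ)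
  obtain ⟨φ, u, hCu, huφ⟩ := geometric_hahn_banach_closed_point hconv hclosed hnotmem
  have hu0 : 0 < u := by simpa using hCu 0 hzero
  -- Riesz representation
  set w0 : Lp ℝ 2 μT := (InnerProductSpace.toDual ℝ (Lp ℝ 2 μT)).symm φ with hw0
  have hrepr : ∀ ξ : Lp ℝ 2 μT, φ ξ = ∫ x, w0 x * ξ x ∂μT := by
    intro ξ
    rw [← InnerProductSpace.toDual_symm_apply (𝕜 := ℝ) (y := φ) (x := ξ)]
    rw [MeasureTheory.L2.inner_def]
    simp [RCLike.inner_apply]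
    exact integral_congr_ae (Filter.Eventually.of_forall fun x => mul_comm _ _)
  obtain ⟨w', hw'm, hw'ae⟩ : ∃ w' : ℝ → ℝ, Measurable w' ∧ ⇑w0 =ᵐ[μT] w' := by
    have := (Lp.aestronglyMeasurable w0).aemeasurable
    exact ⟨this.mk _, this.measurable_mk, this.ae_eq_mk⟩
  have hw'int : Integrable w' μT :=
    ((Lp.memLp w0).integrable (by norm_num)).congr hw'ae
  set g : ℝ → ℝ≥0∞ := fun x => ENNReal.ofReal (w' x) with hg
  have hgm : Measurable g := ENNReal.measurable_ofReal.comp hw'm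
  -- KEY1 : dual ball pairings are bounded by u
  have key1 : ∀ v : ℝ → ℝ≥0∞, Measurable v → N.ρ v ≤ 1 →
      ∫⁻ x, v x * g x ∂μT ≤ ENNReal.ofReal u := by
    intro v hvm hvρ
    rw [lintegral_mul_trunc v g hvm hgm]
    refine iSup_le fun n => ?_
    set S : Set ℝ := {x | 0 < w' x} with hS
    have hSm : MeasurableSet S := measurableSet_lt measurable_const hw'm
    set a : ℝ → ℝ := S.indicator (fun x => (min (v x) (n:ℝ≥0∞)).toReal) with ha
    have ham : Measurable a := (((hvm.min measurable_const)).ennreal_toReal).indicator hSm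
    have hab : ∀ x, ‖a x‖ ≤ (n : ℝ) := by
      intro x
      rw [Real.norm_eq_abs]
      by_cases hxS : x ∈ S
      · rw [ha, Set.indicator_of_mem hxS, abs_of_nonneg ENNReal.toReal_nonneg]
        calc (min (v x) (n:ℝ≥0∞)).toReal ≤ ((n:ℝ≥0∞)).toReal :=
            ENNReal.toReal_mono (by simp) (min_le_right _ _)
          _ = (n:ℝ) := by simp
      · rw [ha, Set.indicator_of_notMem hxS]; simp
    have hamem : MemLp a 2 μT := by
      refine MemLp.mono_exponent ?_ (le_top : (2:ℝ≥0∞) ≤ ⊤)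
      exact memLp_top_of_bound ham.aestronglyMeasurable _ (Filter.Eventually.of_forall hab)
    set ua : Lp ℝ 2 μT := hamem.toLp a with hua
    have huaC : ua ∈ C := by
      refine ⟨S.indicator (fun x => min (v x) (n:ℝ≥0∞)), (hvm.min measurable_const).indicator hSm, ?_, ?_⟩
      · filter_upwards [hamem.coeFn_toLp] with x hx
        rw [hx, ha]
        by_cases hxS : x ∈ S
        · rw [Set.indicator_of_mem hxS, Set.indicator_of_mem hxS,
            ENNReal.ofReal_toReal (by simp : min (v x) (n:ℝ≥0∞) ≠ ⊤)]
        · rw [Set.indicator_of_notMem hxS, Set.indicator_of_notMem hxS]; simp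
      · refine le_trans (N.mono _ _ ((hvm.min measurable_const).indicator hSm) hvm
          (Filter.Eventually.of_forall fun x => ?_)) hvρ
        exact le_trans (Set.indicator_le_self _ _ x) (min_le_left _ _)
    have hφua : ∫ x, w' x * a x ∂μT < u := by
      have h1 := hCu ua huaC
      rw [hrepr ua] at h1
      refine lt_of_le_of_lt (le_of_eq ?_) h1
      refine integral_congr_ae ?_
      filter_upwards [hw'ae, hamem.coeFn_toLp] with x hx1 hx2
      rw [hx1, hx2]
    -- identify the truncated pairing with the integral
    have hint : Integrable (fun x => a x * w' x) μT :=
      hw'int.bdd_mul ham.aestronglyMeasurable (Filter.Eventually.of_forall hab)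
    have hnn : ∀ x, 0 ≤ a x * w' x := by
      intro x
      by_cases hxS : x ∈ S
      · refine mul_nonneg ?_ (le_of_lt hxS)
        rw [ha, Set.indicator_of_mem hxS]
        exact ENNReal.toReal_nonneg
      · rw [ha, Set.indicator_of_notMem hxS, zero_mul]
    have heq : ∫⁻ x, min (v x) (n:ℝ≥0∞) * g x ∂μT = ENNReal.ofReal (∫ x, a x * w' x ∂μT) := by
      rw [ofReal_integral_eq_lintegral_ofReal hint (Filter.Eventually.of_forall hnn)]
      refine lintegral_congr fun x => ?_
      by_cases hxS : x ∈ S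
      · rw [ha, Set.indicator_of_mem hxS,
          ENNReal.ofReal_mul (ENNReal.toReal_nonneg),
          ENNReal.ofReal_toReal (by simp : min (v x) (n:ℝ≥0∞) ≠ ⊤), hg, mul_comm]
      · have hw'x : w' x ≤ 0 := le_of_not_gt hxS
        rw [ha, Set.indicator_of_notMem hxS, zero_mul, ENNReal.ofReal_zero]
        exact mul_eq_zero.mpr (Or.inr (ENNReal.ofReal_eq_zero.mpr hw'x))
    rw [heq]
    refine ENNReal.ofReal_le_ofReal (le_of_lt ?_)
    calc ∫ x, a x * w' x ∂μT = ∫ x, w' x * a x ∂μT := by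
          refine integral_congr_ae (Filter.Eventually.of_forall fun x => ?_); ring
      _ < u := hφua
  -- KEY2 : the pairing against h exceeds u
  have key2 : ENNReal.ofReal u < ∫⁻ x, h x * g x ∂μT := by
    have h1 : u < ∫ x, w' x * f₀ x ∂μT := by
      have := huφ
      rw [hrepr uh] at this
      refine lt_of_lt_of_le this (le_of_eq ?_)
      refine integral_congr_ae ?_
      filter_upwards [hw'ae, hf₀mem.coeFn_toLp] with x hx1 hx2
      rw [hx1, hx2]
    have hf₀b : ∀ x, ‖f₀ x‖ ≤ M.toReal := by
      intro x
      rw [Real.norm_eq_abs, abs_of_nonneg ENNReal.toReal_nonneg]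
      exact ENNReal.toReal_mono hM (hb x)
    have hint1 : Integrable (fun x => f₀ x * w' x) μT :=
      hw'int.bdd_mul hf₀m.aestronglyMeasurable (Filter.Eventually.of_forall hf₀b)
    have hint2 : Integrable (fun x => f₀ x * max (w' x) 0) μT :=
      hw'int.pos_part.bdd_mul hf₀m.aestronglyMeasurable (Filter.Eventually.of_forall hf₀b)
    have h2 : ∫ x, w' x * f₀ x ∂μT ≤ ∫ x, f₀ x * max (w' x) 0 ∂μT := by
      calc ∫ x, w' x * f₀ x ∂μT = ∫ x, f₀ x * w' x ∂μT := by
            refine integral_congr_ae (Filter.Eventually.of_forall fun x => ?_); ring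
        _ ≤ ∫ x, f₀ x * max (w' x) 0 ∂μT := by
            refine integral_mono hint1 hint2 fun x => ?_
            exact mul_le_mul_of_nonneg_left (le_max_left _ _) ENNReal.toReal_nonneg
    have h3 : u < ∫ x, f₀ x * max (w' x) 0 ∂μT := lt_of_lt_of_le h1 h2
    have h4 : ENNReal.ofReal u < ENNReal.ofReal (∫ x, f₀ x * max (w' x) 0 ∂μT) :=
      (ENNReal.ofReal_lt_ofReal_iff (lt_trans hu0 h3)).mpr h3
    refine lt_of_lt_of_le h4 (le_of_eq ?_)
    rw [ofReal_integral_eq_lintegral_ofReal hint2 (Filter.Eventually.of_forall fun x =>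
      mul_nonneg ENNReal.toReal_nonneg (le_max_right _ _))]
    refine lintegral_congr fun x => ?_
    rw [ENNReal.ofReal_mul ENNReal.toReal_nonneg, ENNReal.ofReal_toReal (hne x), hg]
    congr 1
    rcases le_total 0 (w' x) with hx | hx
    · rw [max_eq_left hx]
    · rw [max_eq_right hx]; simp [ENNReal.ofReal_eq_zero.mpr hx]
  -- conclusion: scale g
  have hassoc_le : N.assoc g ≤ ENNReal.ofReal u := N.assoc_le key1
  have hρh_top : N.ρ h ≠ ⊤ := (N.rho_lt_top hmeas hM hb).ne
  have hρh_0 : N.ρ h ≠ 0 := by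
    intro hc; rw [hc] at hρ; exact absurd hρ (by simp)
  have hpair : (N.ρ h)⁻¹ * ∫⁻ x, h x * g x ∂μT ≤ N.assoc g := by
    have hvρ : N.ρ (fun x => (N.ρ h)⁻¹ * h x) ≤ 1 := by
      rw [N.smul _ _ hmeas, ENNReal.inv_mul_cancel hρh_0 hρh_top]
    have := N.pairing_le g (hmeas.const_mul _) hvρ
    rwa [pull_const _ (ENNReal.inv_ne_top.mpr hρh_0)] at this
  have hgpos : N.assoc g ≠ 0 := by
    intro hc
    rw [hc] at hpair
    have h0 : (0:ℝ≥0∞) < ENNReal.ofReal u := ENNReal.ofReal_pos.mpr hu0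
    have : (N.ρ h)⁻¹ * ∫⁻ x, h x * g x ∂μT = 0 := le_antisymm hpair zero_le
    rcases mul_eq_zero.mp this with hc1 | hc2
    · exact absurd hc1 (by simp [hρh_top])
    · rw [hc2] at key2; exact absurd key2 (by simp [h0.ne'])
  have hgtop : N.assoc g ≠ ⊤ := (lt_of_le_of_lt hassoc_le ENNReal.ofReal_lt_top).ne
  refine ⟨fun x => (N.assoc g)⁻¹ * g x, hgm.const_mul _, N.assoc_scaled_le_one hgpos hgtop, ?_⟩
  have hlt : N.assoc g < ∫⁻ x, h x * g x ∂μT := lt_of_le_of_lt hassoc_le key2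
  have heq2 : (fun x => h x * ((N.assoc g)⁻¹ * g x)) = fun x => (N.assoc g)⁻¹ * h x * g x := by
    funext x; ring
  rw [heq2, pull_const _ (ENNReal.inv_ne_top.mpr hgpos)]
  calc (1:ℝ≥0∞) = (N.assoc g)⁻¹ * N.assoc g := (ENNReal.inv_mul_cancel hgpos hgtop).symm
    _ < (N.assoc g)⁻¹ * ∫⁻ x, h x * g x ∂μT := by
        exact ENNReal.mul_lt_mul_right (by simp [hgtop]) (by simp [hgpos]) hlt

lemma LL_bdd (h : ℝ → ℝ≥0∞) (hmeas : Measurable h) {M : ℝ≥0∞} (hM : M ≠ ⊤)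
    (hb : ∀ x, h x ≤ M) :
    N.ρ h ≤ ⨆ g ∈ {g : ℝ → ℝ≥0∞ | Measurable g ∧ N.assoc g ≤ 1}, ∫⁻ x, h x * g x ∂μT := by
  refine le_of_forall_lt fun c hc => ?_
  obtain ⟨c', hc1, hc2⟩ := exists_between hc
  have hc'0 : c' ≠ 0 := (lt_of_le_of_lt zero_le hc1).ne'
  have hc't : c' ≠ ⊤ := (lt_of_lt_of_le hc2 le_top).ne
  have hρfin : N.ρ h ≠ ⊤ := (N.rho_lt_top hmeas hM hb).ne
  set h' : ℝ → ℝ≥0∞ := fun x => c'⁻¹ * h x with hh'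
  have hh'm : Measurable h' := hmeas.const_mul _
  have hh'b : ∀ x, h' x ≤ c'⁻¹ * M := fun x => mul_le_mul_right (hb x) _
  have hh'ρ : 1 < N.ρ h' := by
    rw [hh']
    rw [N.smul _ _ hmeas]
    calc (1:ℝ≥0∞) = c'⁻¹ * c' := (ENNReal.inv_mul_cancel hc'0 hc't).symm
      _ < c'⁻¹ * N.ρ h := by
          exact ENNReal.mul_lt_mul_right (by simp [hc't]) (by simp [hc'0]) hc2
  obtain ⟨g, hgm, hg1, hgpair⟩ := N.sep h' hh'm
    (ENNReal.mul_ne_top (by simp [hc'0]) hM) hh'b hh'ρ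
  have hpair : c' < ∫⁻ x, h x * g x ∂μT := by
    rw [hh'] at hgpair
    rw [pull_const _ (by simp [hc'0])] at hgpair
    calc c' = c' * 1 := (mul_one c').symm
      _ < c' * (c'⁻¹ * ∫⁻ x, h x * g x ∂μT) := by
          exact ENNReal.mul_lt_mul_right hc'0 hc't hgpair
      _ = ∫⁻ x, h x * g x ∂μT := by
          rw [← mul_assoc, ENNReal.mul_inv_cancel hc'0 hc't, one_mul]
  refine lt_of_lt_of_le hc1 (lt_of_lt_of_le hpair ?_).le
  exact le_iSup₂_of_le g (Set.mem_setOf.mpr ⟨hgm, hg1⟩) le_rfl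

lemma LL (h : ℝ → ℝ≥0∞) (hmeas : Measurable h) :
    N.ρ h ≤ ⨆ g ∈ {g : ℝ → ℝ≥0∞ | Measurable g ∧ N.assoc g ≤ 1}, ∫⁻ x, h x * g x ∂μT := by
  have h1 : h = fun x => ⨆ n : ℕ, min (h x) (n : ℝ≥0∞) := by
    funext x; rw [iSup_min_nat]
  have h2 : N.ρ h = ⨆ n : ℕ, N.ρ (fun x => min (h x) (n:ℝ≥0∞)) := by
    conv_lhs => rw [h1]
    refine N.fatou _ (fun n => hmeas.min measurable_const) fun n => ?_
    refine Filter.Eventually.of_forall fun x => ?_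
    exact min_le_min le_rfl (by exact_mod_cast Nat.cast_le.mpr (Nat.le_succ n))
  rw [h2]
  refine iSup_le fun n => ?_
  refine le_trans (N.LL_bdd _ (hmeas.min measurable_const) (M := (n:ℝ≥0∞)) (by simp)
    (fun x => min_le_right _ _)) ?_
  refine iSup₂_mono fun g hg => ?_
  exact lintegral_mono fun x => mul_le_mul_left (min_le_left _ _) _

end BFNorm

lemma measurable_toIocMod : Measurable (toIocMod two_pi_pos' (-π)) := by
  have : (toIocMod two_pi_pos' (-π)) = fun b => b + (↑⌊(-π + 2*π - b)/(2*π)⌋ : ℝ) * (2*π) := by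
    funext b
    rw [toIocMod, toIocDiv_eq_neg_floor, zsmul_eq_mul]
    push_cast
    ring
  rw [this]
  refine measurable_id.add (Measurable.mul ?_ measurable_const)
  have m1 : Measurable fun b : ℝ => (⌊(-π + 2*π - b)/(2*π)⌋ : ℤ) :=
    Int.measurable_floor.comp ((measurable_const.sub measurable_id).div_const _)
  exact Measurable.comp (measurable_from_top (f := (Int.cast : ℤ → ℝ))) m1

lemma periodic_toIocMod_comp {β : Type*} (g : ℝ → β) :
    Function.Periodic (fun θ => g (toIocMod two_pi_pos' (-π) θ)) (2*π) := fun x => by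
  simp only [toIocMod_add_right]

lemma toIocMod_eq_self_on : ∀ᵐ θ ∂μT, toIocMod two_pi_pos' (-π) θ = θ := by
  rw [μT]
  refine Measure.ae_smul_measure ?_ _
  rw [ae_restrict_iff' measurableSet_Ioc]
  refine Filter.Eventually.of_forall fun θ hθ => ?_
  rw [toIocMod_eq_self]
  convert hθ using 2
  ring

lemma lint_translate_μT (F : ℝ → ℝ≥0∞) (hF : Measurable F)
    (hper : Function.Periodic F (2*π)) (φ : ℝ) :
    ∫⁻ θ, F (θ - φ) ∂μT = ∫⁻ θ, F θ ∂μT := by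
  rw [μT, lintegral_smul_measure, lintegral_smul_measure, lint_translate F hF hper φ]

lemma lint_reflect_μT (F : ℝ → ℝ≥0∞) (hF : Measurable F) :
    ∫⁻ θ, F (-θ) ∂μT = ∫⁻ θ, F θ ∂μT := by
  rw [μT, lintegral_smul_measure, lintegral_smul_measure, lint_reflect F hF]

lemma ae_μT_iff {p : ℝ → Prop} :
    (∀ᵐ x ∂μT, p x) ↔ (∀ᵐ x ∂(volume.restrict (Set.Ioc (-π) π)), p x) := by
  rw [μT, Filter.eventually_iff, Filter.eventually_iff, mem_ae_iff, mem_ae_iff,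
    Measure.smul_apply, smul_eq_mul, mul_eq_zero]
  have : (ENNReal.ofReal (2*π))⁻¹ ≠ 0 := by
    simp only [ne_eq, ENNReal.inv_eq_zero]
    exact ENNReal.ofReal_ne_top
  tauto

lemma lintegral_KB_restrict_lt_top (K : ℝ → ℝ)
    (hKL1 : ∫⁻ θ, (‖K θ‖₊ : ℝ≥0∞) ∂μT < ⊤) :
    ∫⁻ θ in Set.Ioc (-π) π, (‖K θ‖₊ : ℝ≥0∞) ∂volume < ⊤ := by
  rw [μT, lintegral_smul_measure, smul_eq_mul] at hKL1
  by_contra hc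
  rw [not_lt, top_le_iff] at hc
  rw [hc, ENNReal.mul_top (by simp [ENNReal.ofReal_ne_top, ENNReal.mul_eq_top])] at hKL1
  exact absurd hKL1 (by simp)

lemma integrable_K_restrict (K : ℝ → ℝ) (hKmeas : Measurable K)
    (hKL1 : ∫⁻ θ, (‖K θ‖₊ : ℝ≥0∞) ∂μT < ⊤) :
    Integrable K (volume.restrict (Set.Ioc (-π) π)) :=
  ⟨hKmeas.aestronglyMeasurable, lintegral_KB_restrict_lt_top K hKL1⟩

lemma conv_nonneg_eq (K : ℝ → ℝ) (hKmeas : Measurable K) (hKpos : ∀ᵐ θ ∂μT, 0 ≤ K θ)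
    (hKL1 : ∫⁻ θ, (‖K θ‖₊ : ℝ≥0∞) ∂μT < ⊤) (p : ℝ → ℝ≥0∞) (hpm : Measurable p)
    (n : ℕ) (hpb : ∀ x, p x ≤ (n : ℝ≥0∞)) (θ : ℝ) :
    (‖conv (fun x => ((p x).toReal : ℂ)) (fun x => (K x : ℂ)) θ‖₊ : ℝ≥0∞)
      = ∫⁻ φ, p (θ - φ) * (‖K φ‖₊ : ℝ≥0∞) ∂μT := by
  have hpne : ∀ x, p x ≠ ⊤ := fun x => (lt_of_le_of_lt (hpb x) (by simp)).ne
  have hKposres : 0 ≤ᵐ[volume.restrict (Set.Ioc (-π) π)] K := ae_μT_iff.mp hKpos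
  set u : ℝ → ℝ := fun φ => (p (θ - φ)).toReal * K φ with hu
  have hum : Measurable u := ((hpm.comp (measurable_const.sub measurable_id)).ennreal_toReal).mul hKmeas
  have huint : Integrable u (volume.restrict (Set.Ioc (-π) π)) := by
    refine (integrable_K_restrict K hKmeas hKL1).bdd_mul
      ((hpm.comp (measurable_const.sub measurable_id)).ennreal_toReal).aestronglyMeasurable
      (c := n) (Filter.Eventually.of_forall fun x => ?_)
    rw [Real.norm_eq_abs, abs_of_nonneg ENNReal.toReal_nonneg]
    calc (p (θ - x)).toReal ≤ ((n:ℝ≥0∞)).toReal := ENNReal.toReal_mono (by simp) (hpb _)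
      _ = (n:ℝ) := by simp
  have hunn : 0 ≤ᵐ[volume.restrict (Set.Ioc (-π) π)] u := by
    filter_upwards [hKposres] with x hx
    exact mul_nonneg ENNReal.toReal_nonneg hx
  have hcval : conv (fun x => ((p x).toReal : ℂ)) (fun x => (K x : ℂ)) θ
      = (((2*π)⁻¹ * ∫ φ in Set.Ioc (-π) π, u φ ∂volume : ℝ) : ℂ) := by
    unfold conv
    have h1 : (fun φ => ((p (θ - φ)).toReal : ℂ) * ((K φ : ℝ) : ℂ)) = fun φ => ((u φ : ℝ) : ℂ) := by
      funext φ; rw [hu]; push_cast; ring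
    rw [h1, intervalIntegral.integral_ofReal,
      intervalIntegral.integral_of_le (by linarith [pi_pos])]
    rw [Complex.real_smul, Complex.ofReal_mul, Complex.ofReal_inv]
  rw [hcval]
  have hrnn : 0 ≤ (2*π)⁻¹ * ∫ φ in Set.Ioc (-π) π, u φ ∂volume := by
    refine mul_nonneg (by positivity) ?_
    exact integral_nonneg_of_ae hunn
  rw [Complex.nnnorm_real, ennnorm_eq_ofReal hrnn, ENNReal.ofReal_mul (by positivity),
    ofReal_integral_eq_lintegral_ofReal huint hunn]
  rw [μT, lintegral_smul_measure, smul_eq_mul, ENNReal.ofReal_inv_of_pos two_pi_pos']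
  congr 1
  refine lintegral_congr_ae ?_
  filter_upwards [hKposres] with φ hφ
  rw [hu, ENNReal.ofReal_mul ENNReal.toReal_nonneg, ENNReal.ofReal_toReal (hpne _),
    ennnorm_eq_ofReal hφ]

lemma pairing_conv_bound (N : BFNorm) (K : ℝ → ℝ) (hKmeas : Measurable K)
    (hKper : Function.Periodic K (2 * π)) (hKpos : ∀ᵐ θ ∂μT, 0 ≤ K θ)
    (hKsym : ∀ᵐ θ ∂μT, K (-θ) = K θ) (hKL1 : ∫⁻ θ, (‖K θ‖₊ : ℝ≥0∞) ∂μT < ⊤)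
    (f : ℝ → ℂ) (hfm : Measurable f) (hfper : Function.Periodic f (2*π))
    (hfρ : N.ρ (fun x => (‖f x‖₊ : ℝ≥0∞)) ≤ 1)
    (p : ℝ → ℝ≥0∞) (hpm : Measurable p) (hpper : Function.Periodic p (2*π))
    (n : ℕ) (hpb : ∀ x, p x ≤ (n:ℝ≥0∞)) (hpassoc : N.assoc p ≤ 1) :
    ∫⁻ θ, (∫⁻ φ, (‖f (θ - φ)‖₊ : ℝ≥0∞) * (‖K φ‖₊ : ℝ≥0∞) ∂μT) * p θ ∂μT
      ≤ convOpNorm N.assocC (fun θ => (K θ : ℂ)) := by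
  set A : ℝ → ℝ≥0∞ := fun x => (‖f x‖₊ : ℝ≥0∞) with hA
  set KB : ℝ → ℝ≥0∞ := fun x => (‖K x‖₊ : ℝ≥0∞) with hKB
  have hAm : Measurable A := hfm.nnnorm.coe_nnreal_ennreal
  have hKBm : Measurable KB := hKmeas.nnnorm.coe_nnreal_ennreal
  have hAne : ∀ x, A x ≠ ⊤ := fun x => ENNReal.coe_ne_top
  have hKBne : ∀ x, KB x ≠ ⊤ := fun x => ENNReal.coe_ne_top
  have hpne : ∀ x, p x ≠ ⊤ := fun x => (lt_of_le_of_lt (hpb x) (by simp)).ne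
  have hAper : Function.Periodic A (2*π) := fun x => by
    show ((‖f (x + 2*π)‖₊ : ℝ≥0∞)) = ((‖f x‖₊ : ℝ≥0∞))
    rw [hfper x]
  -- Step 1: massage and swap
  have e1 : ∫⁻ θ, (∫⁻ φ, A (θ - φ) * KB φ ∂μT) * p θ ∂μT
      = ∫⁻ φ, KB φ * ∫⁻ θ, A (θ - φ) * p θ ∂μT ∂μT := by
    have m1 : Measurable (Function.uncurry fun θ φ => A (θ - φ) * KB φ * p θ) :=
      ((hAm.comp (measurable_fst.sub measurable_snd)).mul
        (hKBm.comp measurable_snd)).mul (hpm.comp measurable_fst)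
    calc ∫⁻ θ, (∫⁻ φ, A (θ - φ) * KB φ ∂μT) * p θ ∂μT
        = ∫⁻ θ, ∫⁻ φ, A (θ - φ) * KB φ * p θ ∂μT ∂μT := by
          refine lintegral_congr fun θ => ?_
          rw [lintegral_mul_const' (p θ) _ (hpne θ)]
      _ = ∫⁻ φ, ∫⁻ θ, A (θ - φ) * KB φ * p θ ∂μT ∂μT :=
          lintegral_lintegral_swap m1.aemeasurable
      _ = ∫⁻ φ, KB φ * ∫⁻ θ, A (θ - φ) * p θ ∂μT ∂μT := by
          refine lintegral_congr fun φ => ?_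
          rw [← lintegral_const_mul' (KB φ) _ (hKBne φ)]
          refine lintegral_congr fun θ => ?_
          ring
  -- Step 2: translation invariance in the inner integral
  have e2 : ∀ φ, ∫⁻ θ, A (θ - φ) * p θ ∂μT = ∫⁻ θ, A θ * p (θ + φ) ∂μT := by
    intro φ
    have hFm : Measurable (fun t => A t * p (t + φ)) :=
      hAm.mul (hpm.comp (measurable_id.add measurable_const))
    have hFper : Function.Periodic (fun t => A t * p (t + φ)) (2*π) := by
      intro x
      simp only
      rw [hAper x]
      congr 1
      have : x + 2*π + φ = x + φ + 2*π := by ring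
      rw [this, hpper (x + φ)]
    have := lint_translate_μT (fun t => A t * p (t + φ)) hFm hFper φ
    rw [← this]
    refine lintegral_congr fun θ => ?_
    simp only [sub_add_cancel]
  -- Step 3: swap back
  have e3 : ∫⁻ φ, KB φ * ∫⁻ θ, A θ * p (θ + φ) ∂μT ∂μT
      = ∫⁻ θ, A θ * ∫⁻ φ, p (θ + φ) * KB φ ∂μT ∂μT := by
    have m2 : Measurable (Function.uncurry fun φ θ => KB φ * (A θ * p (θ + φ))) :=
      (hKBm.comp measurable_fst).mul ((hAm.comp measurable_snd).mul
        (hpm.comp (measurable_snd.add measurable_fst)))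
    calc ∫⁻ φ, KB φ * ∫⁻ θ, A θ * p (θ + φ) ∂μT ∂μT
        = ∫⁻ φ, ∫⁻ θ, KB φ * (A θ * p (θ + φ)) ∂μT ∂μT := by
          refine lintegral_congr fun φ => ?_
          rw [lintegral_const_mul' (KB φ) _ (hKBne φ)]
      _ = ∫⁻ θ, ∫⁻ φ, KB φ * (A θ * p (θ + φ)) ∂μT ∂μT :=
          lintegral_lintegral_swap m2.aemeasurable
      _ = ∫⁻ θ, A θ * ∫⁻ φ, p (θ + φ) * KB φ ∂μT ∂μT := by
          refine lintegral_congr fun θ => ?_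
          rw [← lintegral_const_mul' (A θ) _ (hAne θ)]
          refine lintegral_congr fun φ => ?_
          ring
  -- Step 4: reflection and symmetry of K
  have e4 : ∀ θ, ∫⁻ φ, p (θ + φ) * KB φ ∂μT = ∫⁻ φ, p (θ - φ) * KB φ ∂μT := by
    intro θ
    have hFm : Measurable (fun φ => p (θ + φ) * KB φ) :=
      (hpm.comp (measurable_const.add measurable_id)).mul hKBm
    have := lint_reflect_μT (fun φ => p (θ + φ) * KB φ) hFm
    rw [← this]
    refine lintegral_congr_ae ?_
    filter_upwards [hKsym] with φ hφ
    rw [← sub_eq_add_neg]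
    congr 1
    show ((‖K (-φ)‖₊ : ℝ≥0∞)) = ((‖K φ‖₊ : ℝ≥0∞))
    rw [hφ]
  -- Step 5: identify with the convolution against the test function
  set gc : ℝ → ℂ := fun x => (((p x).toReal : ℝ) : ℂ) with hgc
  have e5 : ∀ θ, ∫⁻ φ, p (θ - φ) * KB φ ∂μT
      = (‖conv gc (fun x => (K x : ℂ)) θ‖₊ : ℝ≥0∞) :=
    fun θ => (conv_nonneg_eq K hKmeas hKpos hKL1 p hpm n hpb θ).symm
  -- Step 6: pair against A and bound by the associate norm
  have e6 : ∫⁻ θ, A θ * (‖conv gc (fun x => (K x : ℂ)) θ‖₊ : ℝ≥0∞) ∂μT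
      ≤ N.assocC (conv gc (fun x => (K x : ℂ))) :=
    N.pairing_le _ hAm hfρ
  -- Step 7: the test function is in the dual unit ball
  have hgcm : Measurable gc := Complex.measurable_ofReal.comp hpm.ennreal_toReal
  have hgcper : Function.Periodic gc (2*π) := by
    intro x; simp only [hgc, hpper x]
  have hgcnorm : (fun x => ((‖gc x‖₊ : ℝ≥0∞))) = p := by
    funext x
    rw [hgc]
    simp only [Complex.nnnorm_real]
    rw [ennnorm_eq_ofReal ENNReal.toReal_nonneg, ENNReal.ofReal_toReal (hpne x)]
  have hgcassoc : N.assocC gc ≤ 1 := by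
    rw [BFNorm.assocC, hgcnorm]; exact hpassoc
  have e7 : N.assocC (conv gc (fun x => (K x : ℂ)))
      ≤ convOpNorm N.assocC (fun θ => (K θ : ℂ)) :=
    le_iSup₂_of_le gc (Set.mem_setOf.mpr ⟨hgcm, hgcper, hgcassoc⟩) le_rfl
  calc ∫⁻ θ, (∫⁻ φ, A (θ - φ) * KB φ ∂μT) * p θ ∂μT
      = ∫⁻ φ, KB φ * ∫⁻ θ, A (θ - φ) * p θ ∂μT ∂μT := e1
    _ = ∫⁻ φ, KB φ * ∫⁻ θ, A θ * p (θ + φ) ∂μT ∂μT := by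
        refine lintegral_congr fun φ => ?_; rw [e2 φ]
    _ = ∫⁻ θ, A θ * ∫⁻ φ, p (θ + φ) * KB φ ∂μT ∂μT := e3
    _ = ∫⁻ θ, A θ * (‖conv gc (fun x => (K x : ℂ)) θ‖₊ : ℝ≥0∞) ∂μT := by
        refine lintegral_congr fun θ => ?_
        rw [e4 θ, e5 θ]
    _ ≤ N.assocC (conv gc (fun x => (K x : ℂ))) := e6
    _ ≤ convOpNorm N.assocC (fun θ => (K θ : ℂ)) := e7

/-- If the convolution operator `C_K` (with nonnegative symmetric kernel
`K ∈ L¹`) is bounded on the associate space `X'`, then it is bounded on `X` with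
`‖C_K‖_{B(X)} ≤ ‖C_K‖_{B(X')}`. -/
theorem stmt_0 (N : BFNorm) (K : ℝ → ℝ) (hKmeas : Measurable K)
    (hKper : Function.Periodic K (2 * π))
    (hKpos : ∀ᵐ θ ∂μT, 0 ≤ K θ)
    (hKsym : ∀ᵐ θ ∂μT, K (-θ) = K θ)
    (hKL1 : ∫⁻ θ, (‖K θ‖₊ : ℝ≥0∞) ∂μT < ⊤)
    (hbdd : convOpNorm N.assocC (fun θ => (K θ : ℂ)) < ⊤) :
    convOpNorm N.normC (fun θ => (K θ : ℂ)) ≤ convOpNorm N.assocC (fun θ => (K θ : ℂ)) := by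

  refine iSup₂_le fun f hf => ?_
  obtain ⟨hfm, hfper, hfρ⟩ := hf
  have hAm : Measurable (fun x => ((‖f x‖₊ : ℝ≥0∞))) := hfm.nnnorm.coe_nnreal_ennreal
  have hKBm : Measurable (fun x => ((‖K x‖₊ : ℝ≥0∞))) := hKmeas.nnnorm.coe_nnreal_ennreal
  have hHm : Measurable (fun θ => ∫⁻ φ, (‖f (θ - φ)‖₊ : ℝ≥0∞) * (‖K φ‖₊ : ℝ≥0∞) ∂μT) := by
    refine Measurable.lintegral_prod_right'
      (f := fun q : ℝ × ℝ => (‖f (q.1 - q.2)‖₊ : ℝ≥0∞) * (‖K q.2‖₊ : ℝ≥0∞)) ?_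
    exact (hAm.comp (measurable_fst.sub measurable_snd)).mul (hKBm.comp measurable_snd)
  have hconvm : Measurable (conv f (fun θ => (K θ : ℂ))) := by
    unfold conv
    have h1 : ∀ θ : ℝ, (∫ φ in (-π)..π, f (θ - φ) * (K φ : ℂ))
        = ∫ φ in Set.Ioc (-π) π, f (θ - φ) * (K φ : ℂ) ∂volume := fun θ =>
      intervalIntegral.integral_of_le (by linarith [pi_pos])
    simp_rw [h1]
    refine Measurable.const_smul ?_ ((2*π)⁻¹)
    have hsm : StronglyMeasurable (fun q : ℝ × ℝ => f (q.1 - q.2) * ((K q.2 : ℂ))) :=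
      ((hfm.comp (measurable_fst.sub measurable_snd)).mul
        ((Complex.measurable_ofReal.comp hKmeas).comp measurable_snd)).stronglyMeasurable
    exact hsm.integral_prod_right'.measurable
  have hbd : ∀ θ, (‖conv f (fun θ => (K θ : ℂ)) θ‖₊ : ℝ≥0∞)
      ≤ ∫⁻ φ, (‖f (θ - φ)‖₊ : ℝ≥0∞) * (‖K φ‖₊ : ℝ≥0∞) ∂μT := by
    intro θ
    unfold conv
    rw [intervalIntegral.integral_of_le (by linarith [pi_pos] : (-π:ℝ) ≤ π)]
    have e0 : (‖(2*π)⁻¹ • ∫ φ in Set.Ioc (-π) π, f (θ - φ) * (K φ:ℂ) ∂volume‖₊ : ℝ≥0∞)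
        = (‖(2*π)⁻¹‖₊ : ℝ≥0∞) *
          (‖∫ φ in Set.Ioc (-π) π, f (θ - φ) * (K φ:ℂ) ∂volume‖₊ : ℝ≥0∞) := by
      rw [nnnorm_smul]
      push_cast
      ring
    rw [e0]
    have e1 : ((‖(2*π)⁻¹‖₊ : ℝ≥0∞)) = (ENNReal.ofReal (2*π))⁻¹ := by
      rw [ennnorm_eq_ofReal (by positivity), ENNReal.ofReal_inv_of_pos two_pi_pos']
    rw [e1, μT, lintegral_smul_measure, smul_eq_mul]
    refine mul_le_mul_right ?_ _
    refine le_trans (enorm_integral_le_lintegral_enorm _) ?_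
    refine le_of_eq (lintegral_congr fun φ => ?_)
    change ((‖f (θ - φ) * ((K φ : ℝ) : ℂ)‖₊ : ℝ≥0∞)) = _
    rw [nnnorm_mul, Complex.nnnorm_real]
    push_cast
    ring
  have step1 : N.normC (conv f (fun θ => (K θ : ℂ)))
      ≤ N.ρ (fun θ => ∫⁻ φ, (‖f (θ - φ)‖₊ : ℝ≥0∞) * (‖K φ‖₊ : ℝ≥0∞) ∂μT) := by
    refine N.mono _ _ hconvm.nnnorm.coe_nnreal_ennreal hHm (Filter.Eventually.of_forall hbd)
  refine le_trans step1 (le_trans (N.LL _ hHm) ?_)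
  refine iSup₂_le fun g hg => ?_
  obtain ⟨hgm, hgassoc⟩ := hg
  have c1 : ∫⁻ x, (∫⁻ φ, (‖f (x - φ)‖₊ : ℝ≥0∞) * (‖K φ‖₊ : ℝ≥0∞) ∂μT) * g x ∂μT
      = ⨆ n : ℕ, ∫⁻ x, min (g x) (n : ℝ≥0∞) *
          (∫⁻ φ, (‖f (x - φ)‖₊ : ℝ≥0∞) * (‖K φ‖₊ : ℝ≥0∞) ∂μT) ∂μT := by
    rw [← BFNorm.lintegral_mul_trunc g _ hgm hHm]
    exact lintegral_congr fun x => mul_comm _ _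
  rw [c1]
  refine iSup_le fun n => ?_
  set p : ℝ → ℝ≥0∞ := fun θ => min (g (toIocMod two_pi_pos' (-π) θ)) (n : ℝ≥0∞) with hp
  have hpm : Measurable p := (hgm.comp measurable_toIocMod).min measurable_const
  have hpper : Function.Periodic p (2*π) := fun x => by
    simp only [hp, toIocMod_add_right]
  have hpb : ∀ x, p x ≤ (n : ℝ≥0∞) := fun x => min_le_right _ _
  have haeeq : ∀ᵐ x ∂μT, min (g x) (n : ℝ≥0∞) = p x := by
    filter_upwards [toIocMod_eq_self_on] with x hx
    rw [hp]
    simp only [hx]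
  have c2 : ∫⁻ x, min (g x) (n : ℝ≥0∞) *
        (∫⁻ φ, (‖f (x - φ)‖₊ : ℝ≥0∞) * (‖K φ‖₊ : ℝ≥0∞) ∂μT) ∂μT
      = ∫⁻ x, (∫⁻ φ, (‖f (x - φ)‖₊ : ℝ≥0∞) * (‖K φ‖₊ : ℝ≥0∞) ∂μT) * p x ∂μT := by
    refine lintegral_congr_ae ?_
    filter_upwards [haeeq] with x hx
    rw [← hx, mul_comm]
  rw [c2]
  have hpassoc : N.assoc p ≤ 1 := by
    refine N.assoc_le fun v hv hv1 => ?_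
    have e : ∫⁻ x, v x * p x ∂μT = ∫⁻ x, v x * min (g x) (n:ℝ≥0∞) ∂μT := by
      refine lintegral_congr_ae ?_
      filter_upwards [haeeq] with x hx
      rw [← hx]
    rw [e]
    refine le_trans (lintegral_mono fun x => mul_le_mul_right (min_le_left _ _) _) ?_
    exact le_trans (N.pairing_le g hv hv1) hgassoc
  exact pairing_conv_bound N K hKmeas hKper hKpos hKsym hKL1 f hfm hfper hfρ
    p hpm hpper n hpb hpassoc
end
end

section
/- Let {K_n} be a sequence of bounded functions on T satisfying: K_n ≥ 0, K_n(e^{iθ}) = K_n(e^{-iθ}) a.e., (1/2π)∫_{-π}^{π} K_n(e^{iθ}) dθ = 1, and for each ε > 0, sup_{ε ≤ |θ| ≤ π} K_n(e^{iθ}) → 0 as n → ∞. Let w be the weight defined by w(e^{iθ}) = √m for π/(2m) ≤ |θ| ≤ π/(2m-1) and w(e^{iθ}) = 1 for π/(2m+1) < |θ| < π/(2m), m ∈ ℕ. Then sup_n ‖C_{K_n}‖_{B(L^∞(w⁻¹))} = ∞. -/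
open MeasureTheory Real Set Filter Topology
open scoped ENNReal NNReal Classical

noncomputable section

namespace Stmt6Aux

/-- wrap to `[-π, π)`, `2π`-periodically. -/
def wrap (θ : ℝ) : ℝ := 2 * π * Int.fract ((θ + π) / (2 * π)) - π

lemma wrap_measurable : Measurable wrap :=
  ((measurable_fract.comp ((measurable_id.add_const π).div_const _)).const_mul _).sub
    measurable_const

lemma wrap_periodic : Function.Periodic wrap (2 * π) := by
  intro θ
  have hπ : (0:ℝ) < π := Real.pi_pos
  unfold wrap
  have h : (θ + 2 * π + π) / (2 * π) = (θ + π) / (2 * π) + 1 := by field_simp; ring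
  rw [h, Int.fract_add_one]

lemma wrap_eq_self {θ : ℝ} (h1 : -π ≤ θ) (h2 : θ < π) : wrap θ = θ := by
  have hπ : (0:ℝ) < π := Real.pi_pos
  unfold wrap
  rw [Int.fract_eq_self.2 ⟨div_nonneg (by linarith) (by positivity), by rw [div_lt_one (by positivity)]; linarith⟩]
  field_simp
  ring

lemma wrap_pi : wrap π = -π := by
  have hπ : (0:ℝ) < π := Real.pi_pos
  unfold wrap
  rw [show (π + π) / (2 * π) = 1 by field_simp; ring, Int.fract_one]
  ring

lemma wght_spike {m : ℕ} (hm : 1 ≤ m) {θ : ℝ} (h1 : π / (2 * m) ≤ θ)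
    (h2 : θ ≤ π / (2 * m - 1)) : wght θ = Real.sqrt m := by
  have hπ : (0:ℝ) < π := Real.pi_pos
  have hm1 : (1:ℝ) ≤ (m:ℝ) := by exact_mod_cast hm
  have hθpos : 0 < θ := lt_of_lt_of_le (div_pos hπ (by linarith)) h1
  have habs : |θ| = θ := abs_of_pos hθpos
  unfold wght
  rw [tsum_eq_single (m - 1) ?_]
  · have hcast : ((m - 1 : ℕ) : ℝ) + 1 = (m : ℝ) := by
      have := Nat.cast_sub hm (R := ℝ); rw [this]; simp
    rw [Set.indicator_of_mem]
    · rw [hcast]; ring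
    · rw [hcast]; exact ⟨by rwa [habs], by rwa [habs]⟩
  · intro j hj
    rcases lt_or_gt_of_ne hj with hlt | hgt
    · -- j < m - 1 : interval lies to the right of θ
      have hj1 : (j : ℝ) + 1 ≤ (m : ℝ) - 1 := by
        have : j + 1 ≤ m - 1 := hlt
        have := (Nat.cast_le (α := ℝ)).2 this
        push_cast [Nat.cast_sub hm] at this ⊢
        linarith
      rw [Set.indicator_of_notMem, mul_zero]
      rintro ⟨hA, -⟩
      have : π / (2 * m - 1) < π / (2 * ((j:ℝ) + 1)) :=
        div_lt_div_of_pos_left hπ (by linarith) (by linarith)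
      rw [habs] at hA
      linarith
    · -- j > m - 1, i.e. j ≥ m
      have hj1 : (m : ℝ) ≤ (j : ℝ) := by
        have : m ≤ j := by omega
        exact_mod_cast this
      rw [Set.indicator_of_notMem, mul_zero]
      rintro ⟨-, hB⟩
      have h1' : π / (2 * ((j:ℝ) + 1) - 1) < π / (2 * m) :=
        div_lt_div_of_pos_left hπ (by linarith) (by linarith)
      rw [habs] at hB
      linarith

lemma wght_gap {m : ℕ} (hm : 1 ≤ m) {θ : ℝ} (h1 : π / (2 * m + 1) < θ)
    (h2 : θ < π / (2 * m)) : wght θ = 1 := by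
  have hπ : (0:ℝ) < π := Real.pi_pos
  have hm1 : (1:ℝ) ≤ (m:ℝ) := by exact_mod_cast hm
  have hθpos : 0 < θ := lt_trans (div_pos hπ (by linarith)) h1
  have habs : |θ| = θ := abs_of_pos hθpos
  unfold wght
  rw [show ∀ x:ℝ, 1 + x = 1 ↔ x = 0 from fun x => by constructor <;> intro h <;> linarith]
  have hz : ∀ j : ℕ, (Real.sqrt ((j : ℝ) + 1) - 1) *
      Set.indicator {x : ℝ | π / (2 * ((j : ℝ) + 1)) ≤ |x| ∧ |x| ≤ π / (2 * ((j : ℝ) + 1) - 1)}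
        (fun _ => (1 : ℝ)) θ = 0 := by
    intro j
    rw [Set.indicator_of_notMem, mul_zero]
    rintro ⟨hA, hB⟩
    rw [habs] at hA hB
    rcases le_or_gt ((j:ℝ) + 1) m with hle | hgt
    · have : π / (2 * m) ≤ π / (2 * ((j:ℝ) + 1)) := by
        apply div_le_div_of_nonneg_left hπ.le (by linarith) (by linarith)
      linarith
    · have hj1 : (m : ℝ) + 1 ≤ (j : ℝ) + 1 := by
        have : m + 1 ≤ j + 1 := by exact_mod_cast Nat.succ_le_of_lt (by exact_mod_cast hgt)
        exact_mod_cast this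
      have : π / (2 * ((j:ℝ) + 1) - 1) ≤ π / (2 * m + 1) := by
        apply div_le_div_of_nonneg_left hπ.le (by linarith) (by linarith)
      linarith
  rw [tsum_congr hz, tsum_zero]

lemma intervalIntegrable_of_bounded {F : ℝ → ℝ} (hF : Measurable F) {C : ℝ}
    (hC : ∀ x, |F x| ≤ C) (u v : ℝ) : IntervalIntegrable F volume u v := by
  rw [intervalIntegrable_iff]
  refine Integrable.mono' (g := fun _ => C)
    (integrableOn_const measure_Ioc_lt_top.ne)
    hF.aestronglyMeasurable.restrict (ae_of_all _ fun x => by simpa using hC x)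

lemma cμ_ne_zero : (ENNReal.ofReal (2 * π))⁻¹ ≠ 0 :=
  ENNReal.inv_ne_zero.2 ENNReal.ofReal_ne_top

lemma ae_μT_iff {p : ℝ → Prop} :
    (∀ᵐ θ ∂μT, p θ) ↔ ∀ᵐ θ ∂(volume : Measure ℝ), θ ∈ Set.Ioc (-π) π → p θ := by
  rw [μT, Measure.ae_ennreal_smul_measure_iff cμ_ne_zero, ae_restrict_iff' measurableSet_Ioc]

set_option maxHeartbeats 2000000 in
lemma key (K : ℕ → ℝ → ℝ)
    (hmeas : ∀ n, Measurable (K n))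
    (hbdd : ∀ n, ∃ C : ℝ, ∀ θ, |K n θ| ≤ C)
    (hpos : ∀ n, ∀ᵐ θ ∂μT, 0 ≤ K n θ)
    (hsym : ∀ n, ∀ᵐ θ ∂μT, K n (-θ) = K n θ)
    (hmean : ∀ n, ∫ θ in (-π)..π, K n θ = 2 * π)
    (hloc : ∀ ε : ℝ, 0 < ε →
      Tendsto (fun n => ⨆ θ : {θ : ℝ // ε ≤ |θ| ∧ |θ| ≤ π}, K n (θ : ℝ)) atTop (𝓝 0))
    (m : ℕ) (hm : 1 ≤ m) :
    ENNReal.ofReal (Real.sqrt m / 8) ≤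
      ⨆ n, convOpNorm
        (fun g => essSup (fun θ => (‖g θ‖₊ : ℝ≥0∞) / (‖wght θ‖₊ : ℝ≥0∞)) μT)
        (fun θ => (K n θ : ℂ)) := by
  have hπ : (0:ℝ) < π := Real.pi_pos
  have hm1 : (1:ℝ) ≤ (m:ℝ) := by exact_mod_cast hm
  set a : ℝ := π / (2 * m) with ha_def
  set b : ℝ := π / (2 * m - 1) with hb_def
  have ha : 0 < a := div_pos hπ (by linarith)
  have hb : a < b := div_lt_div_of_pos_left hπ (by linarith) (by linarith)
  have hbπ : b ≤ π := div_le_self hπ.le (by linarith)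
  set L : ℝ := b - a with hL_def
  have hLpos : 0 < L := sub_pos.2 hb
  have hLπ : L ≤ π := by simp only [hL_def]; linarith
  have hg0 : π / (2 * m + 1) < a := div_lt_div_of_pos_left hπ (by linarith) (by linarith)
  set g0 : ℝ := a - π / (2 * m + 1) with hg0_def
  have hg0pos : 0 < g0 := sub_pos.2 hg0
  -- choose n
  obtain ⟨n, hn⟩ := ((hloc L hLpos).eventually_lt_const (by norm_num : (0:ℝ) < 1/2)).exists
  obtain ⟨C, hC⟩ := hbdd n
  have hC0 : (0:ℝ) ≤ C := (abs_nonneg _).trans (hC 0)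
  have hKle : ∀ x, K n x ≤ C := fun x => (abs_le.1 (hC x)).2
  have hKi : ∀ u v : ℝ, IntervalIntegrable (K n) volume u v := fun u v =>
    intervalIntegrable_of_bounded (hmeas n) hC u v
  have hsup : ∀ φ : ℝ, L ≤ |φ| → |φ| ≤ π → K n φ ≤ 1/2 := by
    intro φ h1 h2
    have hbA : BddAbove (Set.range fun θ : {θ : ℝ // L ≤ |θ| ∧ |θ| ≤ π} => K n (θ:ℝ)) :=
      ⟨C, by rintro x ⟨θ, rfl⟩; exact hKle _⟩
    exact le_trans (le_ciSup hbA ⟨φ, h1, h2⟩) hn.le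
  -- integral bounds
  have hi1 : ∫ φ in L..π, K n φ ≤ π/2 := by
    calc ∫ φ in L..π, K n φ ≤ ∫ _ in L..π, (1/2 : ℝ) := by
          apply intervalIntegral.integral_mono_on hLπ (hKi _ _) intervalIntegrable_const
          intro x hx
          exact hsup x (by rw [abs_of_pos (lt_of_lt_of_le hLpos hx.1)]; exact hx.1)
            (by rw [abs_of_pos (lt_of_lt_of_le hLpos hx.1)]; exact hx.2)
      _ = (π - L) * (1/2) := by rw [intervalIntegral.integral_const]; ring_nf
      _ ≤ π/2 := by nlinarith
  have hi2 : ∫ φ in (-π)..(-L), K n φ ≤ π/2 := by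
    calc ∫ φ in (-π)..(-L), K n φ ≤ ∫ _ in (-π)..(-L), (1/2 : ℝ) := by
          apply intervalIntegral.integral_mono_on (by linarith) (hKi _ _) intervalIntegrable_const
          intro x hx
          have : |x| = -x := abs_of_neg (by linarith [hx.2])
          exact hsup x (by rw [this]; linarith [hx.2]) (by rw [this]; linarith [hx.1])
      _ = (-L - (-π)) * (1/2) := by rw [intervalIntegral.integral_const]; rw [smul_eq_mul]
      _ ≤ π/2 := by nlinarith
  have hadd1 := intervalIntegral.integral_add_adjacent_intervals (hKi (-π) (-L)) (hKi (-L) L)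
  have hadd2 := intervalIntegral.integral_add_adjacent_intervals (hKi (-π) L) (hKi L π)
  rw [hmean n] at hadd2
  have hmid : π ≤ ∫ φ in (-L)..L, K n φ := by linarith
  -- symmetry
  have hae_sym : ∀ᵐ φ ∂(volume : Measure ℝ), φ ∈ Set.uIoc 0 L → K n (-φ) = K n φ := by
    have h := ae_μT_iff.1 (hsym n)
    filter_upwards [h] with φ hφ hmem
    rw [Set.uIoc_of_le hLpos.le] at hmem
    exact hφ ⟨by linarith [hmem.1], le_trans hmem.2 hLπ⟩
  have hsymint : ∫ φ in (-L)..0, K n φ = ∫ φ in (0:ℝ)..L, K n φ := by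
    have h1 : ∫ x in (0:ℝ)..L, K n (-x) = ∫ x in (-L)..(-0:ℝ), K n x :=
      intervalIntegral.integral_comp_neg (K n)
    rw [neg_zero] at h1
    rw [← h1]
    exact intervalIntegral.integral_congr_ae hae_sym
  have hadd3 := intervalIntegral.integral_add_adjacent_intervals (hKi (-L) 0) (hKi 0 L)
  have hhalf : π/2 ≤ ∫ φ in (-L)..0, K n φ := by linarith
  -- choose δ
  set δ : ℝ := min (min L g0 / 2) (π / (4 * (C + 1))) with hδ_def
  have hminpos : 0 < min L g0 := lt_min hLpos hg0pos
  have hδpos : 0 < δ := lt_min (by positivity) (by positivity)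
  have hδL : δ < L := by
    have h1 : δ ≤ min L g0 / 2 := min_le_left _ _
    have h2 : min L g0 ≤ L := min_le_left _ _
    linarith
  have hδg : δ < g0 := by
    have h1 : δ ≤ min L g0 / 2 := min_le_left _ _
    have h2 : min L g0 ≤ g0 := min_le_right _ _
    linarith
  have hδC : δ ≤ π / (4 * (C + 1)) := min_le_right _ _
  have hi3 : ∫ φ in (-δ)..0, K n φ ≤ π/4 := by
    calc ∫ φ in (-δ)..0, K n φ ≤ ∫ _ in (-δ)..0, C := by
          apply intervalIntegral.integral_mono_on (by linarith) (hKi _ _)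
            intervalIntegrable_const
          exact fun x _ => hKle x
      _ = δ * C := by rw [intervalIntegral.integral_const, smul_eq_mul]; ring
      _ ≤ (π / (4 * (C + 1))) * C := mul_le_mul_of_nonneg_right hδC hC0
      _ ≤ π/4 := by
          rw [div_mul_eq_mul_div, div_le_div_iff₀ (by linarith) (by norm_num)]
          nlinarith
  have hadd4 := intervalIntegral.integral_add_adjacent_intervals (hKi (-L) (-δ)) (hKi (-δ) 0)
  have hi4 : π/4 ≤ ∫ φ in (-L)..(-δ), K n φ := by linarith
  -- the test function
  set sm : ℝ := Real.sqrt m with hsm_def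
  have hsm1 : 1 ≤ sm := by
    rw [hsm_def, show (1:ℝ) = Real.sqrt 1 from (Real.sqrt_one).symm]
    exact Real.sqrt_le_sqrt hm1
  set F : ℝ → ℝ := fun θ => sm * Set.indicator (Set.Icc a b) (fun _ => (1:ℝ)) (wrap θ)
    with hF_def
  have hFmeas : Measurable F :=
    ((measurable_const.indicator measurableSet_Icc).comp wrap_measurable).const_mul sm
  have hFnonneg : ∀ θ, 0 ≤ F θ := by
    intro θ
    apply mul_nonneg (by linarith)
    apply Set.indicator_nonneg (fun _ _ => zero_le_one)
  have hFle : ∀ θ, |F θ| ≤ sm := by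
    intro θ
    rw [hF_def, abs_mul, abs_of_nonneg (by linarith : (0:ℝ) ≤ sm)]
    rcases Set.indicator_eq_zero_or_self (Set.Icc a b) (fun _ => (1:ℝ)) (wrap θ) with h | h
      <;> rw [h] <;> simp <;> linarith
  have hFspike : ∀ x, x ∈ Set.Icc a b → x < π → F x = sm := by
    intro x hx hxπ
    show sm * Set.indicator (Set.Icc a b) (fun _ => (1:ℝ)) (wrap x) = sm
    rw [wrap_eq_self (by linarith [hx.1, ha]) hxπ, Set.indicator_of_mem hx, mul_one]
  set f : ℝ → ℂ := fun θ => ((F θ : ℝ) : ℂ) with hf_def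
  have hfmeas : Measurable f := Complex.measurable_ofReal.comp hFmeas
  have hfper : Function.Periodic f (2*π) := by
    intro θ
    simp only [hf_def, hF_def, Complex.ofReal_inj]
    rw [wrap_periodic θ]
  -- membership in the unit ball
  have hwght_on : ∀ θ ∈ Set.Ioc (-π) π,
      (‖f θ‖₊ : ℝ≥0∞) / (‖wght θ‖₊ : ℝ≥0∞) ≤ 1 := by
    intro θ hθ
    rcases eq_or_lt_of_le hθ.2 with hθπ | hθπ
    · subst hθπ
      have hF0 : F π = 0 := by
        show sm * Set.indicator (Set.Icc a b) (fun _ => (1:ℝ)) (wrap π) = 0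
        rw [wrap_pi, Set.indicator_of_notMem, mul_zero]
        intro hmem
        have := hmem.1
        linarith
      simp [hf_def, hF0]
    · have hwθ : wrap θ = θ := wrap_eq_self (by linarith [hθ.1]) hθπ
      by_cases hθs : θ ∈ Set.Icc a b
      · have hFθ : F θ = sm := hFspike θ hθs hθπ
        have hwg : wght θ = sm := wght_spike hm hθs.1 hθs.2
        simp only [hf_def, Complex.nnnorm_real, hFθ, hwg]
        exact ENNReal.div_self_le_one
      · have hFθ : F θ = 0 := by
          show sm * Set.indicator (Set.Icc a b) (fun _ => (1:ℝ)) (wrap θ) = 0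
          rw [hwθ, Set.indicator_of_notMem hθs, mul_zero]
        simp [hf_def, hFθ]
  have hpos' : ∀ᵐ φ ∂(volume : Measure ℝ), φ ∈ Set.Ioc (-π) π → 0 ≤ K n φ :=
    ae_μT_iff.1 (hpos n)
  have hne : ∀ᵐ φ ∂(volume : Measure ℝ), φ ≠ -π := by
    have h0 : (volume : Measure ℝ) {(-π : ℝ)} = 0 := measure_singleton _
    rw [ae_iff]
    convert h0 using 2
    ext x
    simp [not_not]
  set Kc : ℝ → ℂ := fun θ => ((K n θ : ℝ) : ℂ) with hKc_def
  have hconveq : ∀ θ, conv f Kc θ =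
      (((2*π)⁻¹ * ∫ φ in (-π)..π, F (θ - φ) * K n φ : ℝ) : ℂ) := by
    intro θ
    rw [conv]
    rw [show (fun φ => f (θ - φ) * Kc φ) = fun φ => ((F (θ - φ) * K n φ : ℝ) : ℂ) from
      funext fun φ => by simp only [hf_def, hKc_def]; push_cast; ring]
    rw [intervalIntegral.integral_ofReal, Complex.real_smul, ← Complex.ofReal_mul]
  have hRlb : ∀ θ ∈ Set.Ioo (a - δ) a,
      sm * (π/4) ≤ ∫ φ in (-π)..π, F (θ - φ) * K n φ := by
    intro θ hθ
    set G : ℝ → ℝ := fun φ => sm * Set.indicator (Set.Ioc (-L) (-δ)) (K n) φ with hG_def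
    have hGmeas : Measurable G := ((hmeas n).indicator measurableSet_Ioc).const_mul sm
    have hGbd : ∀ x, |G x| ≤ sm * C := by
      intro x
      show |sm * Set.indicator (Set.Ioc (-L) (-δ)) (K n) x| ≤ sm * C
      rw [abs_mul, abs_of_nonneg (by linarith : (0:ℝ) ≤ sm)]
      apply mul_le_mul_of_nonneg_left _ (by linarith : (0:ℝ) ≤ sm)
      by_cases hx : x ∈ Set.Ioc (-L) (-δ)
      · rw [Set.indicator_of_mem hx]; exact hC x
      · rw [Set.indicator_of_notMem hx]; simpa using hC0
    have hGi : IntervalIntegrable G volume (-π) π :=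
      intervalIntegrable_of_bounded hGmeas hGbd _ _
    have hFKmeas : Measurable (fun φ => F (θ - φ) * K n φ) :=
      (hFmeas.comp (measurable_const.sub measurable_id)).mul (hmeas n)
    have hFKbd : ∀ x, |F (θ - x) * K n x| ≤ sm * C := by
      intro x
      rw [abs_mul]
      exact mul_le_mul (hFle _) (hC x) (abs_nonneg _) (by linarith)
    have hFKi : IntervalIntegrable (fun φ => F (θ - φ) * K n φ) volume (-π) π :=
      intervalIntegrable_of_bounded hFKmeas hFKbd _ _
    have haeineq : ∀ᵐ φ ∂(volume.restrict (Set.Icc (-π) π)), G φ ≤ F (θ - φ) * K n φ := by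
      rw [ae_restrict_iff' measurableSet_Icc]
      filter_upwards [hpos', hne] with φ hposφ hneφ hmem
      have hφIoc : φ ∈ Set.Ioc (-π) π := ⟨lt_of_le_of_ne hmem.1 (Ne.symm hneφ), hmem.2⟩
      by_cases hφ : φ ∈ Set.Ioc (-L) (-δ)
      · show sm * Set.indicator (Set.Ioc (-L) (-δ)) (K n) φ ≤ _
        rw [Set.indicator_of_mem hφ]
        have h1 : a < θ - φ := by have h := hφ.2; have h2 := hθ.1; linarith
        have h2 : θ - φ < b := by
          have h := hφ.1; have h2 := hθ.2
          have : L = b - a := hL_def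
          linarith
        rw [hFspike (θ - φ) ⟨h1.le, h2.le⟩ (lt_of_lt_of_le h2 hbπ)]
      · show sm * Set.indicator (Set.Ioc (-L) (-δ)) (K n) φ ≤ _
        rw [Set.indicator_of_notMem hφ, mul_zero]
        exact mul_nonneg (hFnonneg _) (hposφ hφIoc)
    have hmono := intervalIntegral.integral_mono_ae_restrict
      (by linarith : -π ≤ π) hGi hFKi haeineq
    have hGint : ∫ φ in (-π)..π, G φ = sm * ∫ φ in (-L)..(-δ), K n φ := by
      simp only [hG_def]
      rw [intervalIntegral.integral_const_mul]
      congr 1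
      rw [intervalIntegral.integral_of_le (by linarith : -π ≤ π),
        MeasureTheory.setIntegral_indicator measurableSet_Ioc,
        Set.inter_eq_self_of_subset_right (Set.Ioc_subset_Ioc (by linarith) (by linarith)),
        ← intervalIntegral.integral_of_le (by linarith : -L ≤ -δ)]
    rw [hGint] at hmono
    calc sm * (π/4) ≤ sm * ∫ φ in (-L)..(-δ), K n φ :=
          mul_le_mul_of_nonneg_left hi4 (by linarith)
      _ ≤ _ := hmono
  have hratio_lb : ∀ θ ∈ Set.Ioo (a - δ) a,
      ENNReal.ofReal (sm / 8) ≤ (‖conv f Kc θ‖₊ : ℝ≥0∞) / (‖wght θ‖₊ : ℝ≥0∞) := by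
    intro θ hθ
    have hθ1 := hθ.1
    have hθ2 := hθ.2
    have hθgap1 : π / (2 * m + 1) < θ := by
      have h1 : π / (2 * m + 1) = a - g0 := by rw [hg0_def]; ring
      rw [h1]
      exact lt_trans (sub_lt_sub_left hδg a) hθ1
    have hwθ : wght θ = 1 := wght_gap hm hθgap1 hθ2
    have hnorm1 : (‖wght θ‖₊ : ℝ≥0∞) = 1 := by rw [hwθ]; simp
    have hd1 : (‖conv f Kc θ‖₊ : ℝ≥0∞) / (‖wght θ‖₊ : ℝ≥0∞) = ‖conv f Kc θ‖₊ := by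
      rw [hnorm1]; simp
    rw [hd1, hconveq θ, Complex.nnnorm_real]
    have hval : sm / 8 ≤ (2*π)⁻¹ * ∫ φ in (-π)..π, F (θ - φ) * K n φ := by
      have h1 := hRlb θ hθ
      have h2 : (2*π)⁻¹ * (sm * (π/4)) ≤
          (2*π)⁻¹ * ∫ φ in (-π)..π, F (θ - φ) * K n φ :=
        mul_le_mul_of_nonneg_left h1 (by positivity)
      have h3 : (2*π)⁻¹ * (sm * (π/4)) = sm / 8 := by field_simp; ring
      linarith
    exact le_trans (ENNReal.ofReal_le_ofReal hval) (Real.ofReal_le_enorm _)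
  have hSess : ENNReal.ofReal (sm / 8) ≤
      essSup (fun θ => (‖conv f Kc θ‖₊ : ℝ≥0∞) / (‖wght θ‖₊ : ℝ≥0∞)) μT := by
    by_contra h'
    push_neg at h'
    have hae2 := ae_lt_of_essSup_lt h'
    have hnull := ae_iff.1 hae2
    have h0 : μT (Set.Ioo (a - δ) a) = 0 := by
      refine measure_mono_null ?_ hnull
      intro θ hθ
      exact not_lt.2 (hratio_lb θ hθ)
    have hpos'' : μT (Set.Ioo (a - δ) a) ≠ 0 := by
      rw [μT, Measure.smul_apply, Measure.restrict_apply measurableSet_Ioo,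
        Set.inter_eq_self_of_subset_left ?_, Real.volume_Ioo, smul_eq_mul]
      · apply mul_ne_zero cμ_ne_zero
        rw [Ne, ENNReal.ofReal_eq_zero, not_le]
        linarith
      · intro x hx
        have hgap : (0:ℝ) < π / (2 * m + 1) := div_pos hπ (by linarith)
        have : g0 = a - π / (2 * m + 1) := hg0_def
        exact ⟨by have := hx.1; linarith, by have := hx.2; have := ha_def; linarith [hbπ, hb]⟩
    exact hpos'' h0
  -- assemble
  have hmem : f ∈ {f : ℝ → ℂ | Measurable f ∧ Function.Periodic f (2 * π) ∧
      essSup (fun θ => (‖f θ‖₊ : ℝ≥0∞) / (‖wght θ‖₊ : ℝ≥0∞)) μT ≤ 1} := by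
    refine ⟨hfmeas, hfper, ?_⟩
    exact essSup_le_of_ae_le 1 (ae_μT_iff.2 (ae_of_all _ hwght_on))
  have hle1 : ENNReal.ofReal (sm / 8) ≤ convOpNorm
      (fun g => essSup (fun θ => (‖g θ‖₊ : ℝ≥0∞) / (‖wght θ‖₊ : ℝ≥0∞)) μT) Kc := by
    refine le_trans hSess ?_
    rw [convOpNorm]
    exact le_iSup₂ (f := fun g (_ : g ∈ {f : ℝ → ℂ | Measurable f ∧
      Function.Periodic f (2 * π) ∧
      essSup (fun θ => (‖f θ‖₊ : ℝ≥0∞) / (‖wght θ‖₊ : ℝ≥0∞)) μT ≤ 1}) =>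
      essSup (fun θ => (‖conv g Kc θ‖₊ : ℝ≥0∞) / (‖wght θ‖₊ : ℝ≥0∞)) μT) f hmem
  exact le_trans hle1 (le_iSup (fun n' => convOpNorm
    (fun g => essSup (fun θ => (‖g θ‖₊ : ℝ≥0∞) / (‖wght θ‖₊ : ℝ≥0∞)) μT)
    (fun θ => ((K n' θ : ℝ) : ℂ))) n)

end Stmt6Aux

/-- For any sequence of bounded, nonnegative, symmetric kernels `K_n` with unit
mean and the localization property, the convolution operators `C_{K_n}` are not uniformly
bounded on `L^∞(w⁻¹)` with the special weight `w`: `sup_n ‖C_{K_n}‖_{B(L^∞(w⁻¹))} = ∞`. -/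
theorem stmt_6 (K : ℕ → ℝ → ℝ)
    (hmeas : ∀ n, Measurable (K n)) (hper : ∀ n, Function.Periodic (K n) (2 * π))
    (hbdd : ∀ n, ∃ C : ℝ, ∀ θ, |K n θ| ≤ C)
    (hpos : ∀ n, ∀ᵐ θ ∂μT, 0 ≤ K n θ)
    (hsym : ∀ n, ∀ᵐ θ ∂μT, K n (-θ) = K n θ)
    (hmean : ∀ n, ∫ θ in (-π)..π, K n θ = 2 * π)
    (hloc : ∀ ε : ℝ, 0 < ε →
      Tendsto (fun n => ⨆ θ : {θ : ℝ // ε ≤ |θ| ∧ |θ| ≤ π}, K n (θ : ℝ)) atTop (𝓝 0)) :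
    (⨆ n, convOpNorm
        (fun g => essSup (fun θ => (‖g θ‖₊ : ℝ≥0∞) / (‖wght θ‖₊ : ℝ≥0∞)) μT)
        (fun θ => (K n θ : ℂ))) = ⊤ := by
  by_contra hne
  set t : ℝ := (⨆ n, convOpNorm
        (fun g => essSup (fun θ => (‖g θ‖₊ : ℝ≥0∞) / (‖wght θ‖₊ : ℝ≥0∞)) μT)
        (fun θ => (K n θ : ℂ))).toReal with ht_def
  have hT0 : 0 ≤ t := ENNReal.toReal_nonneg
  have hm : 1 ≤ ⌈(8 * (t + 1))^2⌉₊ + 1 := Nat.le_add_left 1 _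
  have h1 := Stmt6Aux.key K hmeas hbdd hpos hsym hmean hloc (⌈(8 * (t + 1))^2⌉₊ + 1) hm
  have h2 : Real.sqrt ((⌈(8 * (t + 1))^2⌉₊ + 1 : ℕ) : ℝ) / 8 ≤ t :=
    (ENNReal.ofReal_le_iff_le_toReal hne).1 h1
  have h3 : (8 * (t + 1))^2 ≤ ((⌈(8 * (t + 1))^2⌉₊ + 1 : ℕ) : ℝ) := by
    have hceil := Nat.le_ceil ((8 * (t + 1))^2)
    push_cast
    linarith
  have h4 : 8 * (t + 1) ≤ Real.sqrt ((⌈(8 * (t + 1))^2⌉₊ + 1 : ℕ) : ℝ) := by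
    exact Real.le_sqrt_of_sq_le h3
  linarith
end
end
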